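/- Let M be a finite multiset of vectors in {0,1,□}^d with cover (R_M, T_M), let ρ ∈ ℕ, and let M' ⊆ M \ R_M be nonempty such that the compatibility graph on M' with threshold ρ is connected. Let Z(M') be the set of coordinates i ∈ [d] for which there exist y, y' ∈ M' with {y[i], y'[i]} = {0,1}. Then |Z(M') \ T_M| ≤ γ(M')·(|M'| − 1). -/

import Mathlib

open scoped Classical

/-- δ(a,b) for incomplete vectors: the number of coordinates on which
both entries are known and differ. -/
noncomputable def pdist {ι : Type} [Fintype ι] (a b : ι → Option Bool) : ℕ :=
  (Finset.univ.filter fun i => ∃ x y : Bool, a i = some x ∧ b i = some y ∧ x ≠ y).card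

/-- The compatibility graph on a finite set of incomplete vectors with threshold ρ. -/
def compatGraph {ι : Type} [Fintype ι] (S : Finset (ι → Option Bool)) (ρ : ℕ) :
    SimpleGraph {x // x ∈ S} :=
  SimpleGraph.fromRel fun a b => pdist a.1 b.1 ≤ ρ

/-- γ(S): the diameter (maximum pairwise δ) of a finite multiset of incomplete vectors. -/
noncomputable def mdiam {ι : Type} [Fintype ι] (S : Multiset (ι → Option Bool)) : ℕ :=
  (S.toFinset ×ˢ S.toFinset).sup fun p => pdist p.1 p.2

theorem statement_3 {d : ℕ} (ρ : ℕ)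
    (M R : Multiset (Fin d → Option Bool)) (T : Finset (Fin d))
    (hRM : R ≤ M)
    (hcover : ∀ v ∈ M, ∀ i : Fin d, v i = none → v ∈ R ∨ i ∈ T)
    (M' : Multiset (Fin d → Option Bool))
    (hM'M : M' ≤ M) (hM'R : ∀ v ∈ M', v ∉ R) (hne : M' ≠ 0)
    (hconn : (compatGraph M'.toFinset ρ).Connected) :
    ((Finset.univ.filter fun i : Fin d =>
        ∃ y ∈ M', ∃ y' ∈ M', y i = some true ∧ y' i = some false) \ T).card ≤
      mdiam M' * (Multiset.card M' - 1) := by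
  set S := M'.toFinset with hS
  set G := compatGraph S ρ with hG
  -- all entries of members of M' outside T are defined
  have hdef : ∀ v ∈ M', ∀ i : Fin d, i ∉ T → ∃ b : Bool, v i = some b := by
    intro v hv i hiT
    cases hvi : v i with
    | some b => exact ⟨b, rfl⟩
    | none =>
      rcases hcover v (Multiset.subset_of_le hM'M hv) i hvi with h | h
      · exact absurd h (hM'R v hv)
      · exact absurd h hiT
  -- root
  have hSne : S.Nonempty := by
    rw [hS]
    simpa [Multiset.toFinset_nonempty] using hne
  obtain ⟨r0, hr0⟩ := hSne
  let r : {x // x ∈ S} := ⟨r0, hr0⟩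
  -- parent function
  have hpar : ∀ v : {x // x ∈ S}, v ≠ r →
      ∃ w : {x // x ∈ S}, G.dist w r < G.dist v r := by
    intro v hv
    have hreach : G.Reachable v r := hconn v r
    have hpos : 0 < G.dist v r := hreach.pos_dist_of_ne hv
    obtain ⟨p, hp⟩ := hreach.exists_walk_length_eq_dist
    cases p with
    | nil => simp at hp; simp at hpos
    | @cons _ w _ h q =>
      refine ⟨w, ?_⟩
      have := G.dist_le q
      simp [SimpleGraph.Walk.length_cons] at hp
      omega
  choose par hpardist using hpar
  -- the set of coordinates on which v and its parent differ
  let D : {x // x ∈ S} → Finset (Fin d) := fun v =>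
    if h : v = r then ∅ else
      Finset.univ.filter fun i => ∃ x y : Bool, v.1 i = some x ∧ (par v h).1 i = some y ∧ x ≠ y
  -- coverage
  have hcov : ((Finset.univ.filter fun i : Fin d =>
        ∃ y ∈ M', ∃ y' ∈ M', y i = some true ∧ y' i = some false) \ T) ⊆
      Finset.univ.biUnion D := by
    intro i hi
    simp only [Finset.mem_sdiff, Finset.mem_filter, Finset.mem_univ, true_and] at hi
    obtain ⟨⟨y, hy, y', hy', hyt, hyf⟩, hiT⟩ := hi
    by_contra hcon
    simp only [Finset.mem_biUnion, Finset.mem_univ, true_and, not_exists] at hcon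
    -- value at coordinate i
    have hvalN : ∀ n : ℕ, ∀ v : {x // x ∈ S}, G.dist v r = n → v.1 i = r.1 i := by
      intro n
      induction n using Nat.strong_induction_on with
      | _ n ih =>
        intro v hn
        by_cases hvr : v = r
        · rw [hvr]
        · have h1 := hcon v
          simp only [D, dif_neg hvr, Finset.mem_filter, Finset.mem_univ, true_and,
            ] at h1
          obtain ⟨b, hb⟩ := hdef v.1 (Multiset.mem_toFinset.1 v.2) i hiT
          obtain ⟨b', hb'⟩ := hdef (par v hvr).1 (Multiset.mem_toFinset.1 (par v hvr).2) i hiT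
          have hbb : b = b' := by
            by_contra hne'
            exact h1 ⟨b, b', hb, hb', hne'⟩
          have := ih (G.dist (par v hvr) r) (hn ▸ hpardist v hvr) (par v hvr) rfl
          rw [hb, hbb, ← hb', this]
    have hval : ∀ v : {x // x ∈ S}, v.1 i = r.1 i := fun v => hvalN _ v rfl
    have h1 : (⟨y, by simpa [hS] using hy⟩ : {x // x ∈ S}).1 i = r.1 i := hval _
    have h2 : (⟨y', by simpa [hS] using hy'⟩ : {x // x ∈ S}).1 i = r.1 i := hval _
    simp only at h1 h2
    rw [hyt] at h1; rw [hyf] at h2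
    rw [← h1] at h2
    simp at h2
  -- cardinality bound
  have hDcard : ∀ v : {x // x ∈ S}, (D v).card ≤ mdiam M' := by
    intro v
    by_cases h : v = r
    · simp [D, h]
    · simp only [D, dif_neg h]
      have : pdist v.1 (par v h).1 ≤ mdiam M' := by
        apply Finset.le_sup (f := fun p => pdist p.1 p.2)
          (s := M'.toFinset ×ˢ M'.toFinset) (b := (v.1, (par v h).1))
        exact Finset.mem_product.2 ⟨v.2, (par v h).2⟩
      exact this
  calc ((Finset.univ.filter fun i : Fin d =>
        ∃ y ∈ M', ∃ y' ∈ M', y i = some true ∧ y' i = some false) \ T).card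
      ≤ (Finset.univ.biUnion D).card := Finset.card_le_card hcov
    _ ≤ ∑ v : {x // x ∈ S}, (D v).card := Finset.card_biUnion_le
    _ = ∑ v ∈ Finset.univ.filter (· ≠ r), (D v).card := by
        rw [Finset.sum_filter_of_ne]
        intro v _ hv
        by_contra hvr
        simp [D, hvr] at hv
    _ ≤ ∑ v ∈ Finset.univ.filter (· ≠ r), mdiam M' := Finset.sum_le_sum fun v _ => hDcard v
    _ = (Finset.univ.filter (· ≠ r)).card * mdiam M' := by rw [Finset.sum_const, smul_eq_mul]
    _ ≤ (Multiset.card M' - 1) * mdiam M' := by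
        apply Nat.mul_le_mul_right
        have h1 : (Finset.univ.filter (· ≠ r)).card = Fintype.card {x // x ∈ S} - 1 := by
          rw [Finset.filter_ne']
          rw [Finset.card_erase_of_mem (Finset.mem_univ r)]
          rfl
        have h2 : Fintype.card {x // x ∈ S} = S.card := Fintype.card_coe S
        have h3 : S.card ≤ Multiset.card M' := Multiset.toFinset_card_le M'
        omega
    _ = mdiam M' * (Multiset.card M' - 1) := Nat.mul_comm _ _
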